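/- As formal power series in q, the identity ∑_{n≥r} q^{n^2} / ((q;q)_{n-r} (q;q)_{n+r}) = q^{r^2} / (q;q)_∞ holds for every nonnegative integer r. -/

import Mathlib

open PowerSeries Finset

noncomputable def qPoch (n : ℕ) : PowerSeries ℚ :=
  ∏ k ∈ Finset.range n, (1 - (X : PowerSeries ℚ) ^ (k + 1))

noncomputable def gauss (L : ℕ) (s : ℤ) : PowerSeries ℚ :=
  if 0 ≤ s ∧ s ≤ (L : ℤ) then
    qPoch L * (qPoch s.toNat)⁻¹ * (qPoch (L - s.toNat))⁻¹
  else 0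

/- ### Basic lemmas about `qPoch` -/

lemma constCoeff_qPoch (n : ℕ) : constantCoeff (R := ℚ) (qPoch n) = 1 := by
  simp [qPoch, map_prod]

lemma qPoch_ne (n : ℕ) : constantCoeff (R := ℚ) (qPoch n) ≠ 0 := by
  simp [constCoeff_qPoch]

lemma qPoch_mul_inv (n : ℕ) : qPoch n * (qPoch n)⁻¹ = 1 :=
  PowerSeries.mul_inv_cancel _ (qPoch_ne n)

lemma qPoch_inv_mul (n : ℕ) : (qPoch n)⁻¹ * qPoch n = 1 :=
  PowerSeries.inv_mul_cancel _ (qPoch_ne n)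

lemma qPoch_nz (n : ℕ) : qPoch n ≠ 0 := by
  intro h; have := constCoeff_qPoch n; rw [h] at this; simp at this

lemma qPoch_zero : qPoch 0 = 1 := by simp [qPoch]

lemma qPoch_succ (n : ℕ) : qPoch (n + 1) = qPoch n * (1 - (X : PowerSeries ℚ) ^ (n + 1)) := by
  simp [qPoch, Finset.prod_range_succ]

lemma qPoch_split {a b : ℕ} (h : a ≤ b) :
    qPoch b = qPoch a * ∏ k ∈ Finset.Ico a b, (1 - (X : PowerSeries ℚ) ^ (k + 1)) := by
  rw [qPoch, qPoch, ← Finset.prod_range_mul_prod_Ico _ h]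

/- ### Gaussian binomials -/

noncomputable def g (L a : ℕ) : PowerSeries ℚ :=
  if a ≤ L then qPoch L * (qPoch a)⁻¹ * (qPoch (L - a))⁻¹ else 0

lemma g_mul {L a : ℕ} (h : a ≤ L) : g L a * (qPoch a * qPoch (L - a)) = qPoch L := by
  rw [g, if_pos h]
  have ia := qPoch_inv_mul a
  have id := qPoch_inv_mul (L - a)
  linear_combination (qPoch L * ((qPoch a)⁻¹ * qPoch a)) * id + qPoch L * ia

lemma g_zero (L : ℕ) : g L 0 = 1 := by
  rw [g, if_pos (Nat.zero_le L), Nat.sub_zero, qPoch_zero, inv_one, mul_one, mul_comm]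
  exact qPoch_inv_mul L

lemma g_self (L : ℕ) : g L L = 1 := by
  rw [g, if_pos (le_refl L), Nat.sub_self, qPoch_zero, inv_one, mul_one]
  exact qPoch_mul_inv L

lemma g_of_gt {L a : ℕ} (h : L < a) : g L a = 0 := by
  simp [g, Nat.not_le.mpr h]

lemma pascal1 (L a : ℕ) :
    g (L + 1) (a + 1) = g L a + (X : PowerSeries ℚ) ^ (a + 1) * g L (a + 1) := by
  rcases lt_or_ge L a with h | h
  · rw [g_of_gt h, show g (L+1) (a+1) = 0 from g_of_gt (by omega),
      show g L (a+1) = 0 from g_of_gt (by omega)]; simp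
  rcases eq_or_lt_of_le h with rfl | hlt
  · rw [show g a (a+1) = 0 from g_of_gt (by omega), mul_zero, add_zero, g_self, g_self]
  · have ha1 : a + 1 ≤ L := hlt
    apply mul_right_cancel₀ (mul_ne_zero (qPoch_nz (a+1)) (qPoch_nz (L-a)))
    have h1 : g (L+1) (a+1) * (qPoch (a+1) * qPoch (L - a)) = qPoch (L+1) := by
      have := g_mul (L := L+1) (a := a+1) (by omega)
      rwa [(by omega : L + 1 - (a+1) = L - a)] at this
    have h2 : g L a * (qPoch a * qPoch (L - a)) = qPoch L := g_mul h
    have h3 : g L (a+1) * (qPoch (a+1) * qPoch (L - a - 1)) = qPoch L := by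
      have := g_mul (L := L) (a := a+1) ha1
      rwa [(by omega : L - (a+1) = L - a - 1)] at this
    have hL : qPoch (L + 1) = qPoch L * (1 - X ^ (L + 1)) := qPoch_succ L
    have hB : qPoch (a + 1) = qPoch a * (1 - X ^ (a + 1)) := qPoch_succ a
    have hC : qPoch (L - a) = qPoch (L - a - 1) * (1 - X ^ (L - a)) := by
      have e : L - a = (L - a - 1) + 1 := by omega
      nth_rewrite 1 [e]; rw [qPoch_succ, ← e]
    have hX : (X : PowerSeries ℚ) ^ (a + 1) * X ^ (L - a) = X ^ (L + 1) := by
      rw [← pow_add]; congr 1; omega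
    rw [add_mul]
    linear_combination h1 + hL - g L a * qPoch (L-a) * hB - (1 - (X : PowerSeries ℚ)^(a+1)) * h2
      - (X : PowerSeries ℚ)^(a+1) * (g L (a+1)) * qPoch (a+1) * hC
      - (X : PowerSeries ℚ)^(a+1) * (1 - (X : PowerSeries ℚ)^(L-a)) * h3 + qPoch L * hX

lemma g_symm {L a : ℕ} (h : a ≤ L) : g L a = g L (L - a) := by
  rw [g, g, if_pos h, if_pos (Nat.sub_le L a), Nat.sub_sub_self h]
  ring

lemma pascal2 (L a : ℕ) :
    g (L + 1) (a + 1) = (X : PowerSeries ℚ) ^ (L - a) * g L a + g L (a + 1) := by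
  rcases lt_or_ge L a with h | h
  · rw [g_of_gt h, show g (L+1) (a+1) = 0 from g_of_gt (by omega),
      show g L (a+1) = 0 from g_of_gt (by omega)]; simp
  rcases eq_or_lt_of_le h with rfl | hlt
  · rw [show g a (a+1) = 0 from g_of_gt (by omega), add_zero, g_self, g_self,
      Nat.sub_self, pow_zero, one_mul]
  · have h1 : g (L+1) (a+1) = g (L+1) (L - a) := by
      have := g_symm (L := L+1) (a := a+1) (by omega)
      rwa [(by omega : L + 1 - (a+1) = L - a)] at this
    have e : L - a = (L - a - 1) + 1 := by omega
    rw [h1, e, pascal1, ← e]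
    have h2 : g L (L - a - 1) = g L (a + 1) := by
      have := g_symm (L := L) (a := L - a - 1) (by omega)
      rwa [(by omega : L - (L - a - 1) = a + 1)] at this
    have h3 : g L (L - a) = g L a := by
      have := g_symm (L := L) (a := L - a) (Nat.sub_le L a)
      rwa [Nat.sub_sub_self h] at this
    rw [h2, h3, add_comm]

/- ### q-Vandermonde -/

lemma vdm (n : ℕ) : ∀ k d : ℕ, g (k + d + n) k =
    ∑ j ∈ range (k + 1), (X : PowerSeries ℚ) ^ (j * (d + j)) * g (k + d) (k - j) * g n j := by
  induction n with
  | zero =>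
    intro k d
    rw [Finset.sum_eq_single 0]
    · simp [g_zero]
    · intro j _ hj
      rw [show g 0 j = 0 from g_of_gt (by omega), mul_zero]
    · intro h; exact absurd (mem_range.mpr (by omega)) h
  | succ n ih =>
    intro k d
    cases k with
    | zero => simp [g_zero]
    | succ k' =>
      rw [show k' + 1 + d + (n + 1) = (k' + d + n + 1) + 1 by ring, pascal2,
        show k' + d + n + 1 - k' = d + n + 1 by omega]
      rw [Finset.sum_range_succ' _ (k' + 1)]
      have expand : ∀ i ∈ range (k' + 1),
          (X : PowerSeries ℚ) ^ ((i+1) * (d + (i+1))) * g (k' + 1 + d) (k' + 1 - (i+1)) *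
            g (n + 1) (i+1)
          = (X : PowerSeries ℚ) ^ (d + n + 1) *
              ((X : PowerSeries ℚ) ^ (i * ((d+1) + i)) * g (k' + (d+1)) (k' - i) * g n i)
            + (X : PowerSeries ℚ) ^ ((i+1) * (d + (i+1))) * g (k' + 1 + d) (k' + 1 - (i+1)) *
              g n (i+1) := by
        intro i _
        rw [pascal2 n i, mul_add]
        congr 1
        rw [show k' + 1 + d = k' + (d+1) by ring, show k' + 1 - (i+1) = k' - i by omega]
        rcases le_or_gt i n with hin | hin
        · obtain ⟨m, rfl⟩ : ∃ m, n = i + m := ⟨n - i, by omega⟩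
          rw [show i + m - i = m by omega]
          have hx : (X : PowerSeries ℚ) ^ ((i+1) * (d + (i+1))) * X ^ m
              = X ^ (d + (i + m) + 1) * X ^ (i * ((d+1) + i)) := by
            rw [← pow_add, ← pow_add]; congr 1; ring
          linear_combination (g (k' + (d+1)) (k' - i) * g (i + m) i) * hx
        · rw [show g n i = 0 from g_of_gt hin]; ring
      rw [Finset.sum_congr rfl expand, Finset.sum_add_distrib, ← Finset.mul_sum]
      have ih1 : g (k' + d + n + 1) k' =
          ∑ i ∈ range (k' + 1),
            (X : PowerSeries ℚ) ^ (i * ((d+1) + i)) * g (k' + (d+1)) (k' - i) * g n i := by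
        rw [show k' + d + n + 1 = k' + (d+1) + n by ring]; exact ih k' (d+1)
      have ih2 : g (k' + d + n + 1) (k' + 1) =
          (∑ i ∈ range (k' + 1),
            (X : PowerSeries ℚ) ^ ((i+1) * (d + (i+1))) * g (k' + 1 + d) (k' + 1 - (i+1)) *
              g n (i+1))
          + (X : PowerSeries ℚ) ^ (0 * (d + 0)) * g (k' + 1 + d) (k' + 1 - 0) * g (n + 1) 0 := by
        rw [show k' + d + n + 1 = (k' + 1) + d + n by ring, ih (k' + 1) d,
          Finset.sum_range_succ' _ (k' + 1), g_zero, g_zero]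
      rw [ih1, ih2]
      ring

/- ### Tail lemmas -/

lemma tail_prod (a b : ℕ) :
    ∃ t : PowerSeries ℚ, ∏ k ∈ Finset.Ico a b, (1 - (X : PowerSeries ℚ) ^ (k + 1))
      = 1 + X ^ (a + 1) * t := by
  induction b with
  | zero => exact ⟨0, by simp⟩
  | succ b ihb =>
    rcases lt_or_ge b a with h | h
    · exact ⟨0, by rw [Finset.Ico_eq_empty (by omega)]; simp⟩
    · obtain ⟨t, ht⟩ := ihb
      refine ⟨t - X ^ (b - a) - t * X ^ (b + 1), ?_⟩
      rw [Finset.prod_Ico_succ_top h, ht]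
      have hx : (X : PowerSeries ℚ) ^ (b + 1) = X ^ (a + 1) * X ^ (b - a) := by
        rw [← pow_add]; congr 1; omega
      linear_combination -hx

lemma inv_tail {B : ℕ} {V t : PowerSeries ℚ} (h : V = 1 + X ^ (B + 1) * t) :
    ∃ s : PowerSeries ℚ, V⁻¹ = 1 + X ^ (B + 1) * s := by
  have hc : constantCoeff (R := ℚ) V ≠ 0 := by
    rw [h]; simp
  refine ⟨-(t * V⁻¹), ?_⟩
  have hm := PowerSeries.inv_mul_cancel V hc
  linear_combination hm - V⁻¹ * h

lemma coeff_mul_tail (f t : PowerSeries ℚ) (B n : ℕ) (h : n < B) :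
    PowerSeries.coeff (R := ℚ) n (f * (1 + X ^ B * t)) = PowerSeries.coeff (R := ℚ) n f := by
  rw [mul_add, mul_one, map_add, show f * ((X : PowerSeries ℚ) ^ B * t) = X ^ B * (f * t) by ring,
    PowerSeries.coeff_X_pow_mul', if_neg (by omega), add_zero]

/- ### Master lemma -/

lemma master (r N n : ℕ) (hn : n ≤ N) :
    PowerSeries.coeff (R := ℚ) n (∑ j ∈ range (N + 1),
        (X : PowerSeries ℚ) ^ (j * (2*r + j)) * (qPoch j)⁻¹ * (qPoch (2*r + j))⁻¹)
      = PowerSeries.coeff (R := ℚ) n (qPoch N)⁻¹ := by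
  set M := 2 * N + 1 with hM
  have step1 : PowerSeries.coeff (R := ℚ) n (g (M + 2*r + M) M) = PowerSeries.coeff (R := ℚ) n (qPoch N)⁻¹ := by
    obtain ⟨t3, ht3⟩ := tail_prod (M + 2*r) (M + 2*r + M)
    obtain ⟨t4, ht4⟩ := tail_prod N M
    have hSplit : qPoch M = qPoch N * (1 + X ^ (N + 1) * t4) := by
      rw [qPoch_split (show N ≤ M by omega), ht4]
    obtain ⟨s, hs⟩ := inv_tail (B := N) (V := 1 + X ^ (N + 1) * t4) rfl
    have hinv : (qPoch M)⁻¹ = (qPoch N)⁻¹ * (1 + X ^ (N + 1) * s) := by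
      rw [hSplit, PowerSeries.mul_inv_rev, hs, mul_comm]
    have hg3 : g (M + 2*r + M) M = qPoch (M + 2*r + M) * (qPoch M)⁻¹ * (qPoch (M + 2*r))⁻¹ := by
      rw [g, if_pos (by omega), show M + 2*r + M - M = M + 2*r by omega]
    have d3 : qPoch (M + 2*r + M) * (qPoch (M + 2*r))⁻¹ = 1 + X ^ (M + 2*r + 1) * t3 := by
      rw [qPoch_split (show M + 2*r ≤ M + 2*r + M by omega), ht3]
      linear_combination (1 + (X : PowerSeries ℚ) ^ (M + 2*r + 1) * t3) * qPoch_mul_inv (M + 2*r)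
    have hform : g (M + 2*r + M) M
        = (qPoch N)⁻¹ * (1 + X ^ (N + 1) * s) * (1 + X ^ (M + 2*r + 1) * t3) := by
      rw [hg3, hinv]
      linear_combination ((qPoch N)⁻¹ * (1 + (X : PowerSeries ℚ) ^ (N + 1) * s)) * d3
    rw [hform, coeff_mul_tail _ t3 _ _ (by omega : n < M + 2*r + 1),
      coeff_mul_tail _ s _ _ (by omega : n < N + 1)]
  have hv := vdm M M (2*r)
  have step3 : ∀ j ∈ range (N + 1),
      PowerSeries.coeff (R := ℚ) n ((X : PowerSeries ℚ) ^ (j * (2*r + j)) * g (M + 2*r) (M - j) * g M j)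
      = PowerSeries.coeff (R := ℚ) n
          ((X : PowerSeries ℚ) ^ (j * (2*r + j)) * (qPoch j)⁻¹ * (qPoch (2*r + j))⁻¹) := by
    intro j hj
    have hjN : j ≤ N := by simpa [Nat.lt_succ_iff] using hj
    obtain ⟨t1, ht1⟩ := tail_prod (M - j) (M + 2*r)
    obtain ⟨t2, ht2⟩ := tail_prod (M - j) M
    have d1 : qPoch (M + 2*r) * (qPoch (M - j))⁻¹ = 1 + X ^ (M - j + 1) * t1 := by
      rw [qPoch_split (show M - j ≤ M + 2*r by omega), ht1]
      linear_combination (1 + (X : PowerSeries ℚ) ^ (M - j + 1) * t1) * qPoch_mul_inv (M - j)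
    have d2 : qPoch M * (qPoch (M - j))⁻¹ = 1 + X ^ (M - j + 1) * t2 := by
      rw [qPoch_split (show M - j ≤ M by omega), ht2]
      linear_combination (1 + (X : PowerSeries ℚ) ^ (M - j + 1) * t2) * qPoch_mul_inv (M - j)
    have hg1 : g (M + 2*r) (M - j) = qPoch (M + 2*r) * (qPoch (M - j))⁻¹ * (qPoch (2*r + j))⁻¹ := by
      rw [g, if_pos (by omega), show M + 2*r - (M - j) = 2*r + j by omega]
    have hg2 : g M j = qPoch M * (qPoch j)⁻¹ * (qPoch (M - j))⁻¹ := by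
      rw [g, if_pos (by omega)]
    have key : (X : PowerSeries ℚ) ^ (j * (2*r + j)) * g (M + 2*r) (M - j) * g M j
        = ((X : PowerSeries ℚ) ^ (j * (2*r + j)) * (qPoch j)⁻¹ * (qPoch (2*r + j))⁻¹)
            * (1 + X ^ (M - j + 1) * t1) * (1 + X ^ (M - j + 1) * t2) := by
      rw [hg1, hg2]
      linear_combination ((X : PowerSeries ℚ) ^ (j * (2*r + j)) * (qPoch (2*r + j))⁻¹ *
          (qPoch j)⁻¹ * (qPoch M * (qPoch (M - j))⁻¹)) * d1
        + ((X : PowerSeries ℚ) ^ (j * (2*r + j)) * (qPoch (2*r + j))⁻¹ * (qPoch j)⁻¹ *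
          (1 + (X : PowerSeries ℚ) ^ (M - j + 1) * t1)) * d2
    rw [key, coeff_mul_tail _ t2 _ _ (by omega : n < M - j + 1),
      coeff_mul_tail _ t1 _ _ (by omega : n < M - j + 1)]
  have step2 : PowerSeries.coeff (R := ℚ) n (g (M + 2*r + M) M)
      = ∑ j ∈ range (N + 1), PowerSeries.coeff (R := ℚ) n
          ((X : PowerSeries ℚ) ^ (j * (2*r + j)) * g (M + 2*r) (M - j) * g M j) := by
    rw [hv, map_sum]
    symm
    apply Finset.sum_subset (Finset.range_subset_range.mpr (by omega))
    intro j hjM hj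
    have hjN : N < j := by
      simp only [mem_range, Nat.lt_succ_iff, not_le] at hj ⊢; omega
    rw [mul_assoc, PowerSeries.coeff_X_pow_mul', if_neg]
    have h1 : j ≤ j * (2*r + j) := Nat.le_mul_of_pos_right j (by omega)
    omega
  calc PowerSeries.coeff (R := ℚ) n (∑ j ∈ range (N + 1),
          (X : PowerSeries ℚ) ^ (j * (2*r + j)) * (qPoch j)⁻¹ * (qPoch (2*r + j))⁻¹)
      = ∑ j ∈ range (N + 1), PowerSeries.coeff (R := ℚ) n
          ((X : PowerSeries ℚ) ^ (j * (2*r + j)) * (qPoch j)⁻¹ * (qPoch (2*r + j))⁻¹) :=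
        map_sum _ _ _
    _ = ∑ j ∈ range (N + 1), PowerSeries.coeff (R := ℚ) n
          ((X : PowerSeries ℚ) ^ (j * (2*r + j)) * g (M + 2*r) (M - j) * g M j) :=
        (Finset.sum_congr rfl step3).symm
    _ = PowerSeries.coeff (R := ℚ) n (g (M + 2*r + M) M) := step2.symm
    _ = PowerSeries.coeff (R := ℚ) n (qPoch N)⁻¹ := step1

/-- `∑_{n ≥ r} q^{n²} / ((q;q)_{n-r} (q;q)_{n+r}) = q^{r²} / (q;q)_∞` as formal power
series: the coefficient of `q^N` on either side agrees for every `N` (terms with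
`n > N + r` and factors `(1 - q^k)` with `k > N` do not affect this coefficient). -/
theorem stmt2 (r : ℕ) : ∀ N : ℕ,
    PowerSeries.coeff (R := ℚ) N (∑ n ∈ Finset.Icc r (N + r),
        (X : PowerSeries ℚ) ^ (n ^ 2) * (qPoch (n - r))⁻¹ * (qPoch (n + r))⁻¹) =
      PowerSeries.coeff (R := ℚ) N ((X : PowerSeries ℚ) ^ (r ^ 2) * (qPoch N)⁻¹) := by
  intro N
  have hre : ∑ n ∈ Finset.Icc r (N + r),
      (X : PowerSeries ℚ) ^ (n ^ 2) * (qPoch (n - r))⁻¹ * (qPoch (n + r))⁻¹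
      = (X : PowerSeries ℚ) ^ (r ^ 2) * ∑ j ∈ range (N + 1),
          (X : PowerSeries ℚ) ^ (j * (2*r + j)) * (qPoch j)⁻¹ * (qPoch (2*r + j))⁻¹ := by
    rw [Finset.mul_sum, ← Finset.Ico_add_one_right_eq_Icc, Finset.sum_Ico_eq_sum_range,
      show N + r + 1 - r = N + 1 by omega]
    apply Finset.sum_congr rfl
    intro j _
    rw [show r + j - r = j by omega, show r + j + r = 2*r + j by omega,
      show (r + j) ^ 2 = r ^ 2 + j * (2*r + j) by ring, pow_add]
    ring
  rw [hre, PowerSeries.coeff_X_pow_mul', PowerSeries.coeff_X_pow_mul']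
  split_ifs with h
  · exact master r N (N - r ^ 2) (by omega)
  · rfl
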